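/- For every n ≥ 1, the first player (Red) has a winning strategy in finite Hex on the n×n board: a Red strategy such that every complete play consistent with it results in a total coloring that Red wins. -/

import Mathlib

/-- Hex adjacency on the integer grid: `p` and `q` are adjacent iff
`q - p ∈ {(1,0), (-1,0), (0,1), (0,-1), (1,1), (-1,-1)}`. -/
def HexAdj (p q : ℤ × ℤ) : Prop :=
  q - p ∈ ({(1, 0), (-1, 0), (0, 1), (0, -1), (1, 1), (-1, -1)} : Set (ℤ × ℤ))

/-- The integer coordinates of a cell of the `n × n` board. -/
def finCell {n : ℕ} (p : Fin n × Fin n) : ℤ × ℤ := ((p.1 : ℤ), (p.2 : ℤ))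

/-- Red wins a (partial) coloring of the `n × n` Hex board: there is a finite sequence of
cells, consecutive ones adjacent, all colored `some true`, whose first cell has first
coordinate `0` and whose last cell has first coordinate `n - 1`. -/
def RedWinsFin {n : ℕ} (c : Fin n × Fin n → Option Bool) : Prop :=
  ∃ k : ℕ, ∃ f : Fin (k + 1) → Fin n × Fin n,
    (∀ i : Fin k, HexAdj (finCell (f i.castSucc)) (finCell (f i.succ))) ∧
    (∀ i, c (f i) = some true) ∧
    ((f 0).1 : ℕ) = 0 ∧ ((f (Fin.last k)).1 : ℕ) = n - 1

/-- Blue wins a (partial) coloring of the `n × n` Hex board: there is a finite sequence of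
cells, consecutive ones adjacent, all colored `some false`, whose first cell has second
coordinate `0` and whose last cell has second coordinate `n - 1`. -/
def BlueWinsFin {n : ℕ} (c : Fin n × Fin n → Option Bool) : Prop :=
  ∃ k : ℕ, ∃ f : Fin (k + 1) → Fin n × Fin n,
    (∀ i : Fin k, HexAdj (finCell (f i.castSucc)) (finCell (f i.succ))) ∧
    (∀ i, c (f i) = some false) ∧
    ((f 0).2 : ℕ) = 0 ∧ ((f (Fin.last k)).2 : ℕ) = n - 1

/-- Red wins a total coloring of the `n × n` board. -/
def RedWinsTotal {n : ℕ} (χ : Fin n × Fin n → Bool) : Prop :=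
  RedWinsFin (fun p => some (χ p))

/- ===== auxiliary development ===== -/
lemma hexAdj_iff {p q : ℤ × ℤ} : HexAdj p q ↔
    (q.1 - p.1 = 1 ∧ q.2 - p.2 = 0) ∨ (q.1 - p.1 = -1 ∧ q.2 - p.2 = 0) ∨
    (q.1 - p.1 = 0 ∧ q.2 - p.2 = 1) ∨ (q.1 - p.1 = 0 ∧ q.2 - p.2 = -1) ∨
    (q.1 - p.1 = 1 ∧ q.2 - p.2 = 1) ∨ (q.1 - p.1 = -1 ∧ q.2 - p.2 = -1) := by
  simp [HexAdj, Prod.ext_iff]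

lemma hexAdj_symm {p q : ℤ × ℤ} (h : HexAdj p q) : HexAdj q p := by
  rw [hexAdj_iff] at h ⊢; omega

lemma hexAdj_lip {p q : ℤ × ℤ} (h : HexAdj p q) :
    p.1 - 1 ≤ q.1 ∧ q.1 ≤ p.1 + 1 ∧ p.2 - 1 ≤ q.2 ∧ q.2 ≤ p.2 + 1 := by
  rw [hexAdj_iff] at h; omega

def SAdj (S : Set (ℤ × ℤ)) (p q : ℤ × ℤ) : Prop := p ∈ S ∧ q ∈ S ∧ HexAdj p q

def Reach (S : Set (ℤ × ℤ)) : ℤ × ℤ → ℤ × ℤ → Prop := Relation.ReflTransGen (SAdj S)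

lemma Reach.symm {S : Set (ℤ × ℤ)} {p q : ℤ × ℤ} (h : Reach S p q) : Reach S q p :=
  Relation.reflTransGen_swap.1 (Relation.ReflTransGen.mono (p := Function.swap (SAdj S))
    (fun _ _ h => ⟨h.2.1, h.1, hexAdj_symm h.2.2⟩) _ _ h)

lemma Reach.trans' {S : Set (ℤ × ℤ)} {p q r : ℤ × ℤ} (h : Reach S p q) (h' : Reach S q r) :
    Reach S p r := Relation.ReflTransGen.trans h h'

lemma Reach.mono {S T : Set (ℤ × ℤ)} (hST : S ⊆ T) {p q : ℤ × ℤ} (h : Reach S p q) :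
    Reach T p q :=
  Relation.ReflTransGen.mono (p := SAdj T) (fun _ _ h => ⟨hST h.1, hST h.2.1, h.2.2⟩) _ _ h


lemma reach_cross {S : Set (ℤ × ℤ)} (φ : ℤ × ℤ → ℤ)
    (hφ : ∀ p q : ℤ × ℤ, HexAdj p q → φ q ≤ φ p + 1)
    {x y : ℤ × ℤ} {K : ℤ} (hx : x ∈ S) (h : Reach S x y)
    (hKx : φ x ≤ K) (hKy : K ≤ φ y) :
    ∃ z, z ∈ S ∧ φ z = K ∧ Reach {p | p ∈ S ∧ K ≤ φ p} z y := by
  have main : x ∈ S →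
      ((K ≤ φ x ∧ Reach {p | p ∈ S ∧ K ≤ φ p} x y) ∨
        ∃ z, z ∈ S ∧ φ z = K ∧ Reach {p | p ∈ S ∧ K ≤ φ p} z y) := by
    refine Relation.ReflTransGen.head_induction_on h ?_ ?_
    · intro _; exact Or.inl ⟨hKy, Relation.ReflTransGen.refl⟩
    · rintro a c hac hcy ih haS
      rcases ih hac.2.1 with ⟨hKc, hr⟩ | found
      · by_cases hKa : K ≤ φ a
        · exact Or.inl ⟨hKa, Relation.ReflTransGen.head ⟨⟨haS, hKa⟩, ⟨hac.2.1, hKc⟩, hac.2.2⟩ hr⟩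
        · have := hφ a c hac.2.2
          have : φ c = K := by omega
          exact Or.inr ⟨c, hac.2.1, this, hr⟩
      · exact Or.inr found
  rcases main hx with ⟨hKx', hr⟩ | found
  · exact ⟨x, hx, le_antisymm hKx hKx', hr⟩
  · exact found


def inT (m : ℕ) (p : ℤ × ℤ) : Prop := 0 ≤ p.2 ∧ p.2 ≤ p.1 ∧ p.1 < (m : ℤ)

def maj (a b c : Bool) : Bool := (a && b) || (b && c) || (a && c)

def TriMem (p x : ℤ × ℤ) : Prop := x = p ∨ x = p + (1, 0) ∨ x = p + (1, 1)

lemma maj_pair {a b c v : Bool} (h : maj a b c = v) :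
    (a = v ∧ b = v) ∨ (b = v ∧ c = v) ∨ (a = v ∧ c = v) := by
  revert h; cases a <;> cases b <;> cases c <;> cases v <;> decide

lemma maj12 {a b c v : Bool} (h : maj a b c = v) : a = v ∨ b = v := by
  rcases maj_pair h with ⟨h1, h2⟩ | ⟨h1, h2⟩ | ⟨h1, h2⟩ <;> tauto

lemma maj13 {a b c v : Bool} (h : maj a b c = v) : a = v ∨ c = v := by
  rcases maj_pair h with ⟨h1, h2⟩ | ⟨h1, h2⟩ | ⟨h1, h2⟩ <;> tauto

lemma maj23 {a b c v : Bool} (h : maj a b c = v) : b = v ∨ c = v := by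
  rcases maj_pair h with ⟨h1, h2⟩ | ⟨h1, h2⟩ | ⟨h1, h2⟩ <;> tauto

lemma hexAdj' {p q : ℤ × ℤ}
    (h : q - p = (1, 0) ∨ q - p = (0, 1) ∨ q - p = (1, 1)) : HexAdj p q := by
  rw [hexAdj_iff]
  obtain h | h | h := h <;> rw [Prod.ext_iff] at h <;>
    simp only [Prod.fst_sub, Prod.snd_sub] at h <;> omega

lemma tri_adj {p x y : ℤ × ℤ} (hx : TriMem p x) (hy : TriMem p y) :
    x = y ∨ HexAdj x y := by
  rcases hx with rfl | rfl | rfl <;> rcases hy with rfl | rfl | rfl <;>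
    first
      | exact Or.inl rfl
      | (refine Or.inr ?_; rw [hexAdj_iff]; simp; try omega)

lemma tri_inT {m : ℕ} {p x : ℤ × ℤ} (hp : inT m p) (hx : TriMem p x) :
    inT (m + 1) x := by
  rcases hx with rfl | rfl | rfl <;>
    simp only [inT, Prod.fst_add, Prod.snd_add] at hp ⊢ <;> push_cast <;> omega

lemma reach_tri {S : Set (ℤ × ℤ)} {p x y : ℤ × ℤ} (hx : TriMem p x) (hy : TriMem p y)
    (hxS : x ∈ S) (hyS : y ∈ S) : Reach S x y := by
  rcases tri_adj hx hy with rfl | h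
  · exact Relation.ReflTransGen.refl
  · exact Relation.ReflTransGen.single ⟨hxS, hyS, h⟩

section Bridge

variable {χ : ℤ × ℤ → Bool} {c : Bool}

/-- reduced color -/
def redC (χ : ℤ × ℤ → Bool) (p : ℤ × ℤ) : Bool :=
  maj (χ p) (χ (p + (1, 0))) (χ (p + (1, 1)))

lemma bridge_pos {p q : ℤ × ℤ}
    (hdir : q = p + (1, 0) ∨ q = p + (0, 1) ∨ q = p + (1, 1))
    (hp : redC χ p = c) (hq : redC χ q = c) :
    ∃ u v, TriMem p u ∧ χ u = c ∧ TriMem q v ∧ χ v = c ∧ (u = v ∨ HexAdj u v) := by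
  unfold redC at hp hq
  rcases hdir with rfl | rfl | rfl
  · -- q = p + (1,0)
    by_cases h : χ (p + (1, 0)) = c
    · exact ⟨p + (1, 0), p + (1, 0), Or.inr (Or.inl rfl), h, Or.inl rfl, h, Or.inl rfl⟩
    · have hpp : χ p = c ∧ χ (p + (1, 1)) = c := by
        rcases maj_pair hp with ⟨h1, h2⟩ | ⟨h1, h2⟩ | ⟨h1, h2⟩ <;> tauto
      have hqq : χ (p + (1, 0) + (1, 0)) = c ∧ χ (p + (1, 0) + (1, 1)) = c := by
        rcases maj_pair hq with ⟨h1, h2⟩ | ⟨h1, h2⟩ | ⟨h1, h2⟩ <;> tauto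
      refine ⟨p + (1, 1), p + (1, 0) + (1, 1), Or.inr (Or.inr rfl), hpp.2,
        Or.inr (Or.inr rfl), hqq.2, Or.inr (hexAdj' ?_)⟩
      left; ring
  · -- q = p + (0,1)
    have key : p + (0, 1) + (1, 0) = p + (1, 1) := by rw [Prod.ext_iff]; constructor <;> simp
    by_cases h : χ (p + (1, 1)) = c
    · exact ⟨p + (1, 1), p + (1, 1), Or.inr (Or.inr rfl), h,
        Or.inr (Or.inl key.symm), h, Or.inl rfl⟩
    · have hpp : χ p = c ∧ χ (p + (1, 0)) = c := by
        rcases maj_pair hp with ⟨h1, h2⟩ | ⟨h1, h2⟩ | ⟨h1, h2⟩ <;> tauto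
      rw [key] at hq
      have hqq : χ (p + (0, 1)) = c ∧ χ (p + (0, 1) + (1, 1)) = c := by
        rcases maj_pair hq with ⟨h1, h2⟩ | ⟨h1, h2⟩ | ⟨h1, h2⟩ <;> tauto
      refine ⟨p, p + (0, 1), Or.inl rfl, hpp.1, Or.inl rfl, hqq.1, Or.inr (hexAdj' ?_)⟩
      right; left; ring
  · -- q = p + (1,1)
    by_cases h : χ (p + (1, 1)) = c
    · exact ⟨p + (1, 1), p + (1, 1), Or.inr (Or.inr rfl), h, Or.inl rfl, h, Or.inl rfl⟩
    · have hpp : χ p = c ∧ χ (p + (1, 0)) = c := by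
        rcases maj_pair hp with ⟨h1, h2⟩ | ⟨h1, h2⟩ | ⟨h1, h2⟩ <;> tauto
      have hqq : χ (p + (1, 1) + (1, 0)) = c ∧ χ (p + (1, 1) + (1, 1)) = c := by
        rcases maj_pair hq with ⟨h1, h2⟩ | ⟨h1, h2⟩ | ⟨h1, h2⟩ <;> tauto
      refine ⟨p + (1, 0), p + (1, 1) + (1, 0), Or.inr (Or.inl rfl), hpp.2,
        Or.inr (Or.inl rfl), hqq.1, Or.inr (hexAdj' ?_)⟩
      right; right; ring

lemma bridge {p q : ℤ × ℤ} (hpq : HexAdj p q)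
    (hp : redC χ p = c) (hq : redC χ q = c) :
    ∃ u v, TriMem p u ∧ χ u = c ∧ TriMem q v ∧ χ v = c ∧ (u = v ∨ HexAdj u v) := by
  have flip : (∃ u v, TriMem q u ∧ χ u = c ∧ TriMem p v ∧ χ v = c ∧ (u = v ∨ HexAdj u v)) →
      ∃ u v, TriMem p u ∧ χ u = c ∧ TriMem q v ∧ χ v = c ∧ (u = v ∨ HexAdj u v) := by
    rintro ⟨u, v, h1, h2, h3, h4, h5⟩
    exact ⟨v, u, h3, h4, h1, h2, by
      rcases h5 with rfl | h5
      · exact Or.inl rfl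
      · exact Or.inr (hexAdj_symm h5)⟩
  rcases hexAdj_iff.1 hpq with h | h | h | h | h | h
  · exact bridge_pos (Or.inl (by rw [Prod.ext_iff]; constructor <;> simp <;> omega)) hp hq
  · exact flip (bridge_pos (Or.inl (by rw [Prod.ext_iff]; constructor <;> simp <;> omega)) hq hp)
  · exact bridge_pos (Or.inr (Or.inl (by rw [Prod.ext_iff]; constructor <;> simp <;> omega))) hp hq
  · exact flip (bridge_pos (Or.inr (Or.inl (by rw [Prod.ext_iff]; constructor <;> simp <;> omega))) hq hp)
  · exact bridge_pos (Or.inr (Or.inr (by rw [Prod.ext_iff]; constructor <;> simp <;> omega))) hp hq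
  · exact flip (bridge_pos (Or.inr (Or.inr (by rw [Prod.ext_iff]; constructor <;> simp <;> omega))) hq hp)

end Bridge

def YS (m : ℕ) (χ : ℤ × ℤ → Bool) (c : Bool) : Set (ℤ × ℤ) := {p | inT m p ∧ χ p = c}

lemma lift_reach {m : ℕ} {χ : ℤ × ℤ → Bool} {c : Bool} {a b : ℤ × ℤ}
    (h : Reach (YS m (redC χ) c) a b) (hb : b ∈ YS m (redC χ) c)
    {bhat : ℤ × ℤ} (hb1 : TriMem b bhat) (hb2 : χ bhat = c) :
    ∀ ha : a ∈ YS m (redC χ) c, ∀ ahat, TriMem a ahat → χ ahat = c →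
      Reach (YS (m + 1) χ c) ahat bhat := by
  refine Relation.ReflTransGen.head_induction_on h ?_ ?_
  · intro hb' ahat h1 h2
    exact reach_tri h1 hb1 ⟨tri_inT hb'.1 h1, h2⟩ ⟨tri_inT hb.1 hb1, hb2⟩
  · rintro a' c' ⟨ha', hc', hadj⟩ _ ih _ ahat h1 h2
    obtain ⟨u, v, hu, hcu, hv, hcv, huv⟩ := bridge hadj ha'.2 hc'.2
    have r1 : Reach (YS (m + 1) χ c) ahat u :=
      reach_tri h1 hu ⟨tri_inT ha'.1 h1, h2⟩ ⟨tri_inT ha'.1 hu, hcu⟩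
    have r2 : Reach (YS (m + 1) χ c) u v := by
      rcases huv with rfl | huv
      · exact Relation.ReflTransGen.refl
      · exact Relation.ReflTransGen.single
          ⟨⟨tri_inT ha'.1 hu, hcu⟩, ⟨tri_inT hc'.1 hv, hcv⟩, huv⟩
    exact (r1.trans' r2).trans' (ih hc' v hv hcv)

theorem Ythm : ∀ m : ℕ, 1 ≤ m → ∀ χ : ℤ × ℤ → Bool, ∃ c a b d,
    a ∈ YS m χ c ∧ b ∈ YS m χ c ∧ d ∈ YS m χ c ∧
    a.2 = 0 ∧ b.1 = b.2 ∧ d.1 = (m : ℤ) - 1 ∧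
    Reach (YS m χ c) a b ∧ Reach (YS m χ c) a d := by
  intro m hm
  induction m, hm using Nat.le_induction with
  | base =>
    intro χ
    refine ⟨χ (0, 0), (0, 0), (0, 0), (0, 0), ⟨?_, rfl⟩, ⟨?_, rfl⟩, ⟨?_, rfl⟩,
      rfl, rfl, by norm_num, Relation.ReflTransGen.refl, Relation.ReflTransGen.refl⟩ <;>
      simp [inT]
  | succ m hm ih =>
    intro χ
    obtain ⟨c, a, b, d, ha, hb, hd, ha2, hb12, hd1, hab, had⟩ := ih (redC χ)
    obtain ⟨ahat, hA1, hA2, hA3⟩ : ∃ x, TriMem a x ∧ χ x = c ∧ x.2 = 0 := by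
      rcases maj12 ha.2 with h | h
      · exact ⟨a, Or.inl rfl, h, ha2⟩
      · exact ⟨a + (1, 0), Or.inr (Or.inl rfl), h, by simp [Prod.snd_add, ha2]⟩
    obtain ⟨bhat, hB1, hB2, hB3⟩ : ∃ x, TriMem b x ∧ χ x = c ∧ x.1 = x.2 := by
      rcases maj13 hb.2 with h | h
      · exact ⟨b, Or.inl rfl, h, hb12⟩
      · exact ⟨b + (1, 1), Or.inr (Or.inr rfl), h, by
          simp only [Prod.fst_add, Prod.snd_add]; omega⟩
    obtain ⟨dhat, hD1, hD2, hD3⟩ : ∃ x, TriMem d x ∧ χ x = c ∧ x.1 = ((m + 1 : ℕ) : ℤ) - 1 := by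
      rcases maj23 hd.2 with h | h
      · exact ⟨d + (1, 0), Or.inr (Or.inl rfl), h, by
          simp only [Prod.fst_add]; push_cast; omega⟩
      · exact ⟨d + (1, 1), Or.inr (Or.inr rfl), h, by
          simp only [Prod.fst_add]; push_cast; omega⟩
    refine ⟨c, ahat, bhat, dhat, ⟨tri_inT ha.1 hA1, hA2⟩, ⟨tri_inT hb.1 hB1, hB2⟩,
      ⟨tri_inT hd.1 hD1, hD2⟩, hA3, hB3, hD3, ?_, ?_⟩
    · exact lift_reach hab hb hB1 hB2 ha ahat hA1 hA2
    · exact lift_reach had hd hD1 hD2 ha ahat hA1 hA2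


lemma reach_to_path {S : Set (ℤ × ℤ)} {x y : ℤ × ℤ} (h : Reach S x y) :
    x ∈ S → ∃ k : ℕ, ∃ g : Fin (k + 1) → ℤ × ℤ,
      g 0 = x ∧ g (Fin.last k) = y ∧ (∀ i, g i ∈ S) ∧
      ∀ i : Fin k, HexAdj (g i.castSucc) (g i.succ) := by
  refine Relation.ReflTransGen.head_induction_on h ?_ ?_
  · intro hy
    exact ⟨0, fun _ => y, rfl, rfl, fun _ => hy, fun i => i.elim0⟩
  · rintro a c ⟨haS, hcS, hadj⟩ hreach ih haS'
    obtain ⟨k, g, hg0, hglast, hgS, hgadj⟩ := ih hcS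
    refine ⟨k + 1, Fin.cons a g, Fin.cons_zero _ _, ?_, ?_, ?_⟩
    · rw [← Fin.succ_last, Fin.cons_succ]; exact hglast
    · intro i
      rcases Fin.eq_zero_or_eq_succ i with rfl | ⟨j, rfl⟩
      · simpa using haS'
      · rw [Fin.cons_succ]; exact hgS j
    · intro i
      rcases Fin.eq_zero_or_eq_succ i with rfl | ⟨j, rfl⟩
      · have h1 : (0 : Fin (k + 1)).castSucc = 0 := rfl
        rw [h1, Fin.cons_zero]
        have h2 : (0 : Fin (k + 1)).succ = Fin.succ 0 := rfl
        rw [h2, Fin.cons_succ, hg0]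
        exact hadj
      · have h1 : (j.succ).castSucc = (j.castSucc).succ := by
          rw [Fin.succ_castSucc]
        rw [h1, Fin.cons_succ, Fin.cons_succ]
        exact hgadj j

def BlueWinsTotal {n : ℕ} (χ : Fin n × Fin n → Bool) : Prop :=
  BlueWinsFin (fun p => some (χ p))

/-- clamp an integer point of the embedded square back to a board cell -/
def toC (n : ℕ) (hn : 0 < n) (p : ℤ × ℤ) : Fin n × Fin n :=
  (⟨min (p.1 - ((n : ℤ) - 1)).toNat (n - 1), by omega⟩,
   ⟨min p.2.toNat (n - 1), by omega⟩)

/-- the predicate: p lies in the embedded square -/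
def inSq (n : ℕ) (p : ℤ × ℤ) : Prop :=
  (n : ℤ) - 1 ≤ p.1 ∧ p.1 ≤ 2 * (n : ℤ) - 2 ∧ 0 ≤ p.2 ∧ p.2 ≤ (n : ℤ) - 1

lemma finCell_toC {n : ℕ} (hn : 0 < n) {p : ℤ × ℤ} (h : inSq n p) :
    finCell (toC n hn p) = (p.1 - ((n : ℤ) - 1), p.2) := by
  obtain ⟨h1, h2, h3, h4⟩ := h
  rw [Prod.ext_iff]
  constructor <;> simp only [finCell, toC] <;> push_cast <;> omega

/-- the extension of the board coloring to the Y-board of size 2n-1 -/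
def chiZ (n : ℕ) (hn : 0 < n) (χ : Fin n × Fin n → Bool) (p : ℤ × ℤ) : Bool :=
  if inSqDec : (n : ℤ) - 1 ≤ p.1 ∧ p.1 ≤ 2 * (n : ℤ) - 2 ∧ 0 ≤ p.2 ∧ p.2 ≤ (n : ℤ) - 1
  then χ (toC n hn p)
  else decide (p.1 ≤ (n : ℤ) - 2)

lemma chiZ_in {n : ℕ} (hn : 0 < n) (χ : Fin n × Fin n → Bool) {p : ℤ × ℤ}
    (h : inSq n p) : chiZ n hn χ p = χ (toC n hn p) := dif_pos h

lemma chiZ_out {n : ℕ} (hn : 0 < n) (χ : Fin n × Fin n → Bool) {p : ℤ × ℤ}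
    (h : ¬ inSq n p) : chiZ n hn χ p = decide (p.1 ≤ (n : ℤ) - 2) := dif_neg h

theorem hex_no_draw {n : ℕ} (hn : 0 < n) (χ : Fin n × Fin n → Bool) :
    RedWinsTotal χ ∨ BlueWinsTotal χ := by
  set m := 2 * n - 1 with hm
  have hm1 : 1 ≤ m := by omega
  have hmz : (m : ℤ) = 2 * (n : ℤ) - 1 := by omega
  obtain ⟨c, a, b, d, ha, hb, hd, ha2, hb12, hd1, hab, had⟩ := Ythm m hm1 (chiZ n hn χ)
  set S := YS m (chiZ n hn χ) c with hS
  have hSmem : ∀ p, p ∈ S ↔ inT m p ∧ chiZ n hn χ p = c := fun p => Iff.rfl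
  cases c with
  | true =>
    -- Red wins
    left
    have claim1 : b.1 ≤ (n : ℤ) - 1 := by
      by_contra hcon
      have hns : ¬ inSq n b := by
        unfold inSq; omega
      have := hb.2
      rw [chiZ_out hn χ hns] at this
      simp at this; omega
    have hdb : Reach S b d := hab.symm.trans' had
    obtain ⟨z, hzS, hz1, hzr⟩ := reach_cross Prod.fst
      (fun p q h => by have := hexAdj_lip h; omega)
      hb hdb claim1 (by rw [hd1]; omega)
    have hsq' : ∀ p, p ∈ {p | p ∈ S ∧ (n : ℤ) - 1 ≤ p.1} →
        inSq n p ∧ χ (toC n hn p) = true := by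
      rintro p ⟨⟨hpT, hpc⟩, hp1⟩
      obtain ⟨hT1, hT2, hT3⟩ := hpT
      have hp2 : p.2 ≤ (n : ℤ) - 1 := by
        by_contra hcon
        have hns : ¬ inSq n p := by unfold inSq; omega
        rw [chiZ_out hn χ hns] at hpc
        simp at hpc; omega
      have hsq : inSq n p := ⟨hp1, by omega, hT1, hp2⟩
      exact ⟨hsq, by rw [← chiZ_in hn χ hsq]; exact hpc⟩
    obtain ⟨k, g, hg0, hglast, hgS, hgadj⟩ := reach_to_path hzr ⟨hzS, le_of_eq hz1.symm⟩
    refine ⟨k, fun i => toC n hn (g i), ?_, ?_, ?_, ?_⟩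
    · intro i
      have hadj := hgadj i
      rw [finCell_toC hn (hsq' _ (hgS i.castSucc)).1, finCell_toC hn (hsq' _ (hgS i.succ)).1]
      rw [hexAdj_iff] at hadj ⊢
      dsimp only at hadj ⊢
      omega
    · exact fun i => congrArg some ((hsq' _ (hgS i)).2)
    · show ((toC n hn (g 0)).1 : ℕ) = 0
      have h1 := congrArg Prod.fst (finCell_toC hn (hsq' _ (hgS 0)).1)
      rw [hg0] at h1 ⊢
      simp only [finCell] at h1
      try dsimp only at h1
      push_cast at h1
      omega
    · show ((toC n hn (g (Fin.last k))).1 : ℕ) = n - 1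
      have h1 := congrArg Prod.fst (finCell_toC hn (hsq' _ (hgS (Fin.last k))).1)
      rw [hglast] at h1 ⊢
      simp only [finCell] at h1
      try dsimp only at h1
      push_cast at h1
      omega
  | false =>
    -- Blue wins
    right
    have claim1 : (n : ℤ) - 1 ≤ a.1 := by
      by_contra hcon
      have hns : ¬ inSq n a := by unfold inSq; omega
      have := ha.2
      rw [chiZ_out hn χ hns] at this
      simp at this; omega
    have claim2 : (n : ℤ) - 1 ≤ b.2 := by
      by_contra hcon
      have hns : ¬ inSq n b := by unfold inSq; omega
      have := hb.2
      rw [chiZ_out hn χ hns] at this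
      simp at this; omega
    obtain ⟨z, hzS, hz1, hzr⟩ := reach_cross (fun p => -p.2)
      (fun p q h => by have := hexAdj_lip h; omega)
      hb hab.symm (K := -((n : ℤ) - 1)) (by omega) (by omega)
    have hsq' : ∀ p, p ∈ {p | p ∈ S ∧ -((n : ℤ) - 1) ≤ -p.2} →
        inSq n p ∧ χ (toC n hn p) = false := by
      rintro p ⟨⟨hpT, hpc⟩, hp2⟩
      obtain ⟨hT1, hT2, hT3⟩ := hpT
      have hp1 : (n : ℤ) - 1 ≤ p.1 := by
        by_contra hcon
        have hns : ¬ inSq n p := by unfold inSq; omega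
        rw [chiZ_out hn χ hns] at hpc
        simp at hpc; omega
      have hsq : inSq n p := ⟨hp1, by omega, hT1, by omega⟩
      exact ⟨hsq, by rw [← chiZ_in hn χ hsq]; exact hpc⟩
    obtain ⟨k, g, hg0, hglast, hgS, hgadj⟩ := reach_to_path hzr.symm ⟨ha, by omega⟩
    refine ⟨k, fun i => toC n hn (g i), ?_, ?_, ?_, ?_⟩
    · intro i
      have hadj := hgadj i
      rw [finCell_toC hn (hsq' _ (hgS i.castSucc)).1, finCell_toC hn (hsq' _ (hgS i.succ)).1]
      rw [hexAdj_iff] at hadj ⊢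
      dsimp only at hadj ⊢
      omega
    · exact fun i => congrArg some ((hsq' _ (hgS i)).2)
    · show ((toC n hn (g 0)).2 : ℕ) = 0
      have h1 := congrArg Prod.snd (finCell_toC hn (hsq' _ (hgS 0)).1)
      rw [hg0] at h1 ⊢
      simp only [finCell] at h1
      try dsimp only at h1
      push_cast at h1
      omega
    · show ((toC n hn (g (Fin.last k))).2 : ℕ) = n - 1
      have h1 := congrArg Prod.snd (finCell_toC hn (hsq' _ (hgS (Fin.last k))).1)
      rw [hglast] at h1 ⊢
      simp only [finCell] at h1
      try dsimp only at h1
      push_cast at h1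
      omega


open Finset

variable {n : ℕ}

lemma card_sdiff_univ_insert {α : Type*} [Fintype α] [DecidableEq α]
    (s : Finset α) (m : α) (hm : m ∉ s) :
    (Finset.univ \ insert m s).card < (Finset.univ \ s).card := by
  rw [Finset.card_sdiff_of_subset (Finset.subset_univ _), Finset.card_sdiff_of_subset (Finset.subset_univ _),
    Finset.card_insert_of_notMem hm]
  have h2 := Finset.card_le_univ (insert m s)
  rw [Finset.card_insert_of_notMem hm] at h2
  have h3 : (Finset.univ : Finset α).card = Fintype.card α := Finset.card_univ
  omega

def RedCanWin (R B : Finset (Fin n × Fin n)) (t : Bool) : Prop :=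
  (R ∪ B = Finset.univ ∧ RedWinsTotal (fun q => decide (q ∈ R))) ∨
  (R ∪ B ≠ Finset.univ ∧
    ((t = true ∧ ∃ m : {x : Fin n × Fin n // x ∉ R ∪ B}, RedCanWin (insert m.1 R) B false) ∨
     (t = false ∧ ∀ m : {x : Fin n × Fin n // x ∉ R ∪ B}, RedCanWin R (insert m.1 B) true)))
termination_by (Finset.univ \ (R ∪ B)).card
decreasing_by
  · rw [Finset.insert_union]
    exact card_sdiff_univ_insert _ _ m.2
  · rw [Finset.union_insert]
    exact card_sdiff_univ_insert _ _ m.2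

def BlueCanWin (R B : Finset (Fin n × Fin n)) (t : Bool) : Prop :=
  (R ∪ B = Finset.univ ∧ BlueWinsTotal (fun q => decide (q ∈ R))) ∨
  (R ∪ B ≠ Finset.univ ∧
    ((t = true ∧ ∀ m : {x : Fin n × Fin n // x ∉ R ∪ B}, BlueCanWin (insert m.1 R) B false) ∨
     (t = false ∧ ∃ m : {x : Fin n × Fin n // x ∉ R ∪ B}, BlueCanWin R (insert m.1 B) true)))
termination_by (Finset.univ \ (R ∪ B)).card
decreasing_by
  · rw [Finset.insert_union]
    exact card_sdiff_univ_insert _ _ m.2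
  · rw [Finset.union_insert]
    exact card_sdiff_univ_insert _ _ m.2

lemma RedCanWin_leaf {R B : Finset (Fin n × Fin n)} {t : Bool} (h : R ∪ B = Finset.univ) :
    RedCanWin R B t ↔ RedWinsTotal (fun q => decide (q ∈ R)) := by
  rw [RedCanWin]
  constructor
  · rintro (⟨_, h2⟩ | ⟨hne, _⟩)
    · exact h2
    · exact absurd h hne
  · intro h2; exact Or.inl ⟨h, h2⟩

lemma RedCanWin_red {R B : Finset (Fin n × Fin n)} (h : R ∪ B ≠ Finset.univ) :
    RedCanWin R B true ↔ ∃ m, m ∉ R ∪ B ∧ RedCanWin (insert m R) B false := by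
  rw [RedCanWin]
  constructor
  · rintro (⟨hu, _⟩ | ⟨_, (⟨_, ⟨m, hm⟩⟩ | ⟨hf, _⟩)⟩)
    · exact absurd hu h
    · exact ⟨m.1, m.2, hm⟩
    · exact absurd hf (by simp)
  · rintro ⟨m, hm1, hm2⟩
    exact Or.inr ⟨h, Or.inl ⟨rfl, ⟨⟨m, hm1⟩, hm2⟩⟩⟩

lemma RedCanWin_blue {R B : Finset (Fin n × Fin n)} (h : R ∪ B ≠ Finset.univ) :
    RedCanWin R B false ↔ ∀ m, m ∉ R ∪ B → RedCanWin R (insert m B) true := by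
  rw [RedCanWin]
  constructor
  · rintro (⟨hu, _⟩ | ⟨_, (⟨hf, _⟩ | ⟨_, hall⟩)⟩)
    · exact absurd hu h
    · exact absurd hf (by simp)
    · exact fun m hm => hall ⟨m, hm⟩
  · intro hall
    exact Or.inr ⟨h, Or.inr ⟨rfl, fun m => hall m.1 m.2⟩⟩

lemma BlueCanWin_leaf {R B : Finset (Fin n × Fin n)} {t : Bool} (h : R ∪ B = Finset.univ) :
    BlueCanWin R B t ↔ BlueWinsTotal (fun q => decide (q ∈ R)) := by
  rw [BlueCanWin]
  constructor
  · rintro (⟨_, h2⟩ | ⟨hne, _⟩)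
    · exact h2
    · exact absurd h hne
  · intro h2; exact Or.inl ⟨h, h2⟩

lemma BlueCanWin_red {R B : Finset (Fin n × Fin n)} (h : R ∪ B ≠ Finset.univ) :
    BlueCanWin R B true ↔ ∀ m, m ∉ R ∪ B → BlueCanWin (insert m R) B false := by
  rw [BlueCanWin]
  constructor
  · rintro (⟨hu, _⟩ | ⟨_, (⟨_, hall⟩ | ⟨hf, _⟩)⟩)
    · exact absurd hu h
    · exact fun m hm => hall ⟨m, hm⟩
    · exact absurd hf (by simp)
  · intro hall
    exact Or.inr ⟨h, Or.inl ⟨rfl, fun m => hall m.1 m.2⟩⟩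

lemma BlueCanWin_blue {R B : Finset (Fin n × Fin n)} (h : R ∪ B ≠ Finset.univ) :
    BlueCanWin R B false ↔ ∃ m, m ∉ R ∪ B ∧ BlueCanWin R (insert m B) true := by
  rw [BlueCanWin]
  constructor
  · rintro (⟨hu, _⟩ | ⟨_, (⟨hf, _⟩ | ⟨_, ⟨m, hm⟩⟩)⟩)
    · exact absurd hu h
    · exact absurd hf (by simp)
    · exact ⟨m.1, m.2, hm⟩
  · rintro ⟨m, hm1, hm2⟩
    exact Or.inr ⟨h, Or.inr ⟨rfl, ⟨⟨m, hm1⟩, hm2⟩⟩⟩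

lemma redwins_mono {χ χ' : Fin n × Fin n → Bool} (h : ∀ q, χ q = true → χ' q = true) :
    RedWinsTotal χ → RedWinsTotal χ' := by
  rintro ⟨k, f, h1, h2, h3, h4⟩
  refine ⟨k, f, h1, fun i => ?_, h3, h4⟩
  have := h2 i
  simp only [Option.some_inj] at this ⊢
  exact h (f i) this

lemma red_mono : ∀ (k : ℕ) (R B : Finset (Fin n × Fin n)) (t : Bool) (x : Fin n × Fin n),
    (Finset.univ \ (insert x R ∪ B)).card = k → x ∉ R ∪ B →
    RedCanWin R B t → RedCanWin (insert x R) B t := by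
  intro k
  induction k using Nat.strong_induction_on with
  | _ k ih =>
  intro R B t x hk hx hwin
  have hRB : R ∪ B ≠ Finset.univ := fun h => hx (by rw [h]; exact mem_univ x)
  by_cases hfull : insert x R ∪ B = Finset.univ
  · rw [RedCanWin_leaf hfull]
    cases t with
    | false =>
      rw [RedCanWin_blue hRB] at hwin
      have hx' := hwin x hx
      have hl : R ∪ insert x B = Finset.univ := by
        rw [Finset.union_insert]; rw [Finset.insert_union] at hfull; exact hfull
      rw [RedCanWin_leaf hl] at hx'
      refine redwins_mono ?_ hx'
      intro q hq; simp only [decide_eq_true_eq] at hq ⊢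
      exact Finset.mem_insert_of_mem hq
    | true =>
      rw [RedCanWin_red hRB] at hwin
      obtain ⟨m, hm, hwin⟩ := hwin
      have hmx : m = x := by
        have h1 : m ∈ insert x R ∪ B := hfull ▸ mem_univ m
        simp only [Finset.mem_union, Finset.mem_insert] at h1 hm
        tauto
      subst hmx
      rw [RedCanWin_leaf hfull] at hwin
      exact hwin
  · cases t with
    | true =>
      rw [RedCanWin_red hRB] at hwin
      obtain ⟨m, hm, hwin⟩ := hwin
      rw [RedCanWin_red hfull]
      by_cases hmx : m = x
      · subst hmx
        obtain ⟨z, hz⟩ : ∃ z, z ∉ insert m R ∪ B := by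
          by_contra hcon; push_neg at hcon
          exact hfull (Finset.eq_univ_iff_forall.2 hcon)
        refine ⟨z, hz, ?_⟩
        refine ih _ ?_ (insert m R) B false z rfl hz hwin
        rw [← hk, Finset.insert_union]
        exact card_sdiff_univ_insert _ _ hz
      · refine ⟨m, ?_, ?_⟩
        · simp only [Finset.mem_union, Finset.mem_insert] at hm ⊢; tauto
        · rw [Finset.insert_comm]
          refine ih _ ?_ (insert m R) B false x rfl ?_ hwin
          · rw [← hk]
            have hm2 : m ∉ insert x R ∪ B := by
              simp only [Finset.mem_union, Finset.mem_insert] at hm ⊢; tauto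
            calc (Finset.univ \ (insert x (insert m R) ∪ B)).card
                = (Finset.univ \ insert m (insert x R ∪ B)).card := by
                  rw [Finset.insert_comm, Finset.insert_union]
              _ < (Finset.univ \ (insert x R ∪ B)).card :=
                  card_sdiff_univ_insert _ _ hm2
          · simp only [Finset.mem_union, Finset.mem_insert] at hx ⊢
            push_neg; exact ⟨⟨fun h => hmx (h.symm), fun h => hx (Or.inl h)⟩,
              fun h => hx (Or.inr h)⟩
    | false =>
      rw [RedCanWin_blue hRB] at hwin
      rw [RedCanWin_blue hfull]
      intro m hm
      have hm' : m ∉ R ∪ B := by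
        simp only [Finset.mem_union, Finset.mem_insert] at hm ⊢; tauto
      have hmx : m ≠ x := by
        simp only [Finset.mem_union, Finset.mem_insert] at hm; tauto
      have h1 := hwin m hm'
      refine ih _ ?_ R (insert m B) true x rfl ?_ h1
      · rw [← hk]
        have hm2 : m ∉ insert x R ∪ B := hm
        calc (Finset.univ \ (insert x R ∪ insert m B)).card
            = (Finset.univ \ insert m (insert x R ∪ B)).card := by
              rw [Finset.union_insert]
          _ < (Finset.univ \ (insert x R ∪ B)).card := card_sdiff_univ_insert _ _ hm2
      · simp only [Finset.mem_union, Finset.mem_insert] at hx ⊢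
        push_neg
        exact ⟨fun h => hx (Or.inl h), ⟨fun h => hmx h.symm, fun h => hx (Or.inr h)⟩⟩

lemma zermelo (hn : 0 < n) : ∀ (k : ℕ) (R B : Finset (Fin n × Fin n)) (t : Bool),
    (Finset.univ \ (R ∪ B)).card = k → RedCanWin R B t ∨ BlueCanWin R B t := by
  intro k
  induction k using Nat.strong_induction_on with
  | _ k ih =>
  intro R B t hk
  by_cases hfull : R ∪ B = Finset.univ
  · rcases hex_no_draw hn (fun q => decide (q ∈ R)) with h | h
    · exact Or.inl ((RedCanWin_leaf hfull).2 h)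
    · exact Or.inr ((BlueCanWin_leaf hfull).2 h)
  · cases t with
    | true =>
      by_cases hr : ∃ m, m ∉ R ∪ B ∧ RedCanWin (insert m R) B false
      · exact Or.inl ((RedCanWin_red hfull).2 hr)
      · right
        rw [BlueCanWin_red hfull]
        intro m hm
        push_neg at hr
        rcases ih _ (by rw [← hk, Finset.insert_union]
                        exact card_sdiff_univ_insert _ _ hm)
          (insert m R) B false rfl with h | h
        · exact absurd h (hr m hm)
        · exact h
    | false =>
      by_cases hb : ∃ m, m ∉ R ∪ B ∧ BlueCanWin R (insert m B) true
      · exact Or.inr ((BlueCanWin_blue hfull).2 hb)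
      · left
        rw [RedCanWin_blue hfull]
        intro m hm
        push_neg at hb
        rcases ih _ (by rw [← hk, Finset.union_insert]
                        exact card_sdiff_univ_insert _ _ hm)
          R (insert m B) true rfl with h | h
        · exact h
        · exact absurd h (hb m hm)

lemma blue_red_swap {χ : Fin n × Fin n → Bool} (h : BlueWinsTotal χ) :
    RedWinsTotal (fun q => !(χ q.swap)) := by
  obtain ⟨k, f, h1, h2, h3, h4⟩ := h
  refine ⟨k, fun i => (f i).swap, fun i => ?_, fun i => ?_, ?_, ?_⟩
  · have := h1 i
    rw [hexAdj_iff] at this ⊢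
    simp only [finCell, Prod.fst_swap, Prod.snd_swap] at this ⊢
    omega
  · have := h2 i
    simp only [Option.some_inj] at this ⊢
    simp [Prod.swap_swap, this]
  · simpa using h3
  · simpa using h4

lemma mem_image_swap {S : Finset (Fin n × Fin n)} {q : Fin n × Fin n} :
    q ∈ S.image Prod.swap ↔ q.swap ∈ S := by
  simp only [Finset.mem_image]
  constructor
  · rintro ⟨a, ha, rfl⟩; simpa using ha
  · intro h; exact ⟨q.swap, h, Prod.swap_swap q⟩

lemma union_image_swap_univ {R B : Finset (Fin n × Fin n)} :
    B.image Prod.swap ∪ R.image Prod.swap = Finset.univ ↔ R ∪ B = Finset.univ := by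
  constructor <;> intro h <;> rw [Finset.eq_univ_iff_forall] at h ⊢ <;> intro q
  · have := h q.swap
    simp only [Finset.mem_union, mem_image_swap, Prod.swap_swap] at this ⊢
    tauto
  · have := h q.swap
    simp only [Finset.mem_union, mem_image_swap] at this ⊢
    tauto

lemma mirror : ∀ (k : ℕ) (R B : Finset (Fin n × Fin n)) (t : Bool),
    (Finset.univ \ (R ∪ B)).card = k → Disjoint R B → BlueCanWin R B t →
    RedCanWin (B.image Prod.swap) (R.image Prod.swap) (!t) := by
  intro k
  induction k using Nat.strong_induction_on with
  | _ k ih =>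
  intro R B t hk hdisj hblue
  by_cases hfull : R ∪ B = Finset.univ
  · have hfull' : B.image Prod.swap ∪ R.image Prod.swap = Finset.univ :=
      union_image_swap_univ.2 hfull
    rw [BlueCanWin_leaf hfull] at hblue
    rw [RedCanWin_leaf hfull']
    have heq : (fun q => decide (q ∈ B.image Prod.swap)) =
        (fun q => !((fun r => decide (r ∈ R)) q.swap)) := by
      funext q
      simp only [mem_image_swap]
      by_cases hq : q.swap ∈ R
      · have : q.swap ∉ B := Finset.disjoint_left.1 hdisj hq
        simp [hq, this]
      · have : q.swap ∈ B := by
          have := Finset.eq_univ_iff_forall.1 hfull q.swap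
          simp only [Finset.mem_union] at this; tauto
        simp [hq, this]
    rw [heq]
    exact blue_red_swap hblue
  · have hfull' : B.image Prod.swap ∪ R.image Prod.swap ≠ Finset.univ :=
      fun h => hfull (union_image_swap_univ.1 h)
    cases t with
    | true =>
      rw [BlueCanWin_red hfull] at hblue
      show RedCanWin _ _ false
      rw [RedCanWin_blue hfull']
      intro m' hm'
      have hmem : m'.swap ∉ R ∪ B := by
        simp only [Finset.mem_union, mem_image_swap] at hm' ⊢
        tauto
      have h1 := hblue m'.swap hmem
      have himg : insert m' (R.image Prod.swap) = (insert m'.swap R).image Prod.swap := by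
        rw [Finset.image_insert, Prod.swap_swap]
      rw [himg]
      have hd2 : Disjoint (insert m'.swap R) B := by
        rw [Finset.disjoint_insert_left]
        exact ⟨fun h => hmem (Finset.mem_union_right _ h), hdisj⟩
      have := ih _ (by rw [← hk, Finset.insert_union]
                       exact card_sdiff_univ_insert _ _ hmem)
        (insert m'.swap R) B false rfl hd2 h1
      exact this
    | false =>
      rw [BlueCanWin_blue hfull] at hblue
      obtain ⟨m, hm, h1⟩ := hblue
      show RedCanWin _ _ true
      rw [RedCanWin_red hfull']
      refine ⟨m.swap, ?_, ?_⟩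
      · simp only [Finset.mem_union, mem_image_swap, Prod.swap_swap]
        simp only [Finset.mem_union] at hm; tauto
      · have himg : insert m.swap (B.image Prod.swap) = (insert m B).image Prod.swap := by
          rw [Finset.image_insert]
        rw [himg]
        have hd2 : Disjoint R (insert m B) := by
          rw [Finset.disjoint_insert_right]
          exact ⟨fun h => hm (Finset.mem_union_left _ h), hdisj⟩
        have := ih _ (by rw [← hk, Finset.union_insert]
                         exact card_sdiff_univ_insert _ _ hm)
          R (insert m B) true rfl hd2 h1
        exact this

theorem red_master (hn : 0 < n) : RedCanWin (∅ : Finset (Fin n × Fin n)) ∅ true := by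
  have x0 : Fin n × Fin n := (⟨0, hn⟩, ⟨0, hn⟩)
  have hne : (∅ : Finset (Fin n × Fin n)) ∪ ∅ ≠ Finset.univ := by
    intro h
    have := Finset.eq_univ_iff_forall.1 h
    have h2 := this x0
    simp at h2
  rcases zermelo hn _ ∅ ∅ true rfl with h | h
  · exact h
  · have h2 := mirror _ ∅ ∅ true rfl (Finset.disjoint_empty_left _) h
    have h2' : RedCanWin (∅ : Finset (Fin n × Fin n)) ∅ false := by simpa using h2
    have h3 := red_mono _ ∅ ∅ false x0 rfl (by simp) h2'
    rw [RedCanWin_red hne]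
    exact ⟨x0, by simp, h3⟩


open Finset

variable {n : ℕ}

def selAlt : Bool → List (Fin n × Fin n) → Finset (Fin n × Fin n)
  | _, [] => ∅
  | true, a :: l => insert a (selAlt false l)
  | false, _ :: l => selAlt true l

lemma selAlt_subset {b : Bool} {l : List (Fin n × Fin n)} {q : Fin n × Fin n}
    (h : q ∈ selAlt b l) : q ∈ l := by
  induction l generalizing b with
  | nil => cases b <;> simp [selAlt] at h
  | cons a l ih =>
    cases b with
    | true =>
      simp only [selAlt, Finset.mem_insert] at h
      rcases h with rfl | h
      · exact List.mem_cons_self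
      · exact List.mem_cons_of_mem _ (ih h)
    | false =>
      exact List.mem_cons_of_mem _ (ih h)

lemma selAlt_union (l : List (Fin n × Fin n)) :
    selAlt true l ∪ selAlt false l = l.toFinset := by
  induction l with
  | nil => simp [selAlt]
  | cons a l ih =>
    show insert a (selAlt false l) ∪ selAlt true l = _
    rw [Finset.insert_union, Finset.union_comm, ih, List.toFinset_cons]

lemma selAlt_append (l : List (Fin n × Fin n)) (x : Fin n × Fin n) (b : Bool) :
    selAlt b (l ++ [x]) =
      if l.length % 2 = (if b then 0 else 1) then insert x (selAlt b l) else selAlt b l := by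
  have e1 : (if (true : Bool) then 0 else 1) = 0 := rfl
  have e2 : (if (false : Bool) then 0 else 1) = 1 := rfl
  induction l generalizing b with
  | nil => cases b <;> simp [selAlt]
  | cons a l ih =>
    cases b with
    | false =>
      show selAlt true (l ++ [x]) = _
      rw [ih true, e1, e2]
      simp only [List.length_cons]
      split_ifs with h1 h2 h2 <;> first | rfl | (exfalso; omega)
    | true =>
      show insert a (selAlt false (l ++ [x])) = _
      rw [ih false, e1, e2]
      simp only [List.length_cons]
      split_ifs with h1 h2 h2 <;>
        first
          | (exfalso; omega)
          | (exact Finset.insert_comm _ _ _)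
          | rfl

lemma card_univ_cells : (Finset.univ : Finset (Fin n × Fin n)).card = n * n := by
  rw [Finset.card_univ, Fintype.card_prod, Fintype.card_fin]

open Classical in
noncomputable def hexStrat (n : ℕ) (hn : 0 < n) : List (Fin n × Fin n) → Fin n × Fin n :=
  fun l =>
    if h : ∃ m, m ∉ selAlt true l ∪ selAlt false l ∧
        RedCanWin (insert m (selAlt true l)) (selAlt false l) false then h.choose
    else if h2 : ∃ m : Fin n × Fin n, m ∉ l then h2.choose
    else (⟨0, hn⟩, ⟨0, hn⟩)

lemma hexStrat_not_mem (hn : 0 < n) (l : List (Fin n × Fin n)) (hlen : l.length < n * n) :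
    hexStrat n hn l ∉ l := by
  have hex : ∃ m : Fin n × Fin n, m ∉ l := by
    by_contra hcon
    push_neg at hcon
    have hsub : (Finset.univ : Finset (Fin n × Fin n)) ⊆ l.toFinset :=
      fun q _ => List.mem_toFinset.2 (hcon q)
    have hc := Finset.card_le_card hsub
    have hc2 := l.toFinset_card_le
    rw [card_univ_cells] at hc
    omega
  unfold hexStrat
  split_ifs with h
  · intro hmem
    have hu := selAlt_union (n := n) l
    have h2 : h.choose ∈ l.toFinset := List.mem_toFinset.2 hmem
    rw [← hu] at h2
    exact h.choose_spec.1 h2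
  · exact hex.choose_spec

lemma hexStrat_spec (hn : 0 < n) (l : List (Fin n × Fin n))
    (h : ∃ m, m ∉ selAlt true l ∪ selAlt false l ∧
      RedCanWin (insert m (selAlt true l)) (selAlt false l) false) :
    hexStrat n hn l ∉ selAlt true l ∪ selAlt false l ∧
      RedCanWin (insert (hexStrat n hn l) (selAlt true l)) (selAlt false l) false := by
  unfold hexStrat
  rw [dif_pos h]
  exact h.choose_spec

theorem hexStrat_wins (hn : 0 < n) :
    ∀ p : Fin (n * n) → Fin n × Fin n, Function.Injective p →
    (∀ i : Fin (n * n), (i : ℕ) % 2 = 0 → p i = hexStrat n hn ((List.ofFn p).take i)) →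
    ∀ χ : Fin n × Fin n → Bool,
      (∀ i : Fin (n * n), χ (p i) = decide ((i : ℕ) % 2 = 0)) →
      RedWinsTotal χ := by
  intro p hinj hcons χ hχ
  have hLlen : (List.ofFn p).length = n * n := List.length_ofFn
  have hLnodup : (List.ofFn p).Nodup := List.nodup_ofFn.2 hinj
  have c0 : (if (true : Bool) then 0 else 1) = 0 := rfl
  have c1 : (if (false : Bool) then 0 else 1) = 1 := rfl
  have hlen : ∀ i, i ≤ n * n → ((List.ofFn p).take i).length = i := by
    intro i h; rw [List.length_take]; omega
  have hnodup : ∀ i, ((List.ofFn p).take i).Nodup := fun i => (List.take_sublist i (List.ofFn p)).nodup hLnodup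
  have hnext : ∀ i (hi : i < n * n), (List.ofFn p).take (i + 1) = (List.ofFn p).take i ++ [p ⟨i, hi⟩] := by
    intro i hi
    rw [List.take_succ]
    congr 1
    rw [List.getElem?_ofFn]
    simp [List.ofFnNthVal, hi]
  have hfresh : ∀ i (hi : i < n * n), p ⟨i, hi⟩ ∉ (List.ofFn p).take i := by
    intro i hi hmem
    obtain ⟨j, hj, hget⟩ := List.getElem_of_mem hmem
    rw [List.getElem_take] at hget
    have hj2 : j < i := by rw [hlen i (le_of_lt hi)] at hj; omega
    have hj' : j < n * n := by omega
    have hget2 : p ⟨j, hj'⟩ = p ⟨i, hi⟩ := by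
      rw [← hget]
      exact (List.getElem_ofFn (f := p) (i := j) (by rw [List.length_ofFn]; omega)).symm
    have hji := hinj hget2
    have : j = i := by simpa using congrArg Fin.val hji
    omega
  have key : ∀ i, i ≤ n * n →
      RedCanWin (selAlt true ((List.ofFn p).take i)) (selAlt false ((List.ofFn p).take i)) (decide (i % 2 = 0)) ∧
      (∀ j : Fin (n * n), (j : ℕ) < i → (p j ∈ selAlt true ((List.ofFn p).take i) ↔ (j : ℕ) % 2 = 0)) := by
    intro i
    induction i with
    | zero =>
      intro _
      refine ⟨by simpa [selAlt] using red_master hn, fun j hj => by omega⟩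
    | succ i ihi =>
      intro h1
      have hi : i < n * n := by omega
      obtain ⟨ihR, ihMem⟩ := ihi (by omega)
      have hnu : selAlt true ((List.ofFn p).take i) ∪ selAlt false ((List.ofFn p).take i) ≠ Finset.univ := by
        intro hu
        have hcard := congrArg Finset.card hu
        rw [selAlt_union, List.toFinset_card_of_nodup (hnodup i), hlen i (by omega),
          card_univ_cells] at hcard
        omega
      have hpm : p ⟨i, hi⟩ ∉ selAlt true ((List.ofFn p).take i) ∪ selAlt false ((List.ofFn p).take i) := by
        rw [selAlt_union]
        intro hmem
        exact hfresh i hi (List.mem_toFinset.1 hmem)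
      by_cases hpar : i % 2 = 0
      · -- Red's move
        have hdec : decide (i % 2 = 0) = true := by simp [hpar]
        rw [hdec, RedCanWin_red hnu] at ihR
        have hstr := hexStrat_spec hn ((List.ofFn p).take i) ihR
        have hpi : p ⟨i, hi⟩ = hexStrat n hn ((List.ofFn p).take i) := hcons ⟨i, hi⟩ hpar
        rw [hnext i hi]
        constructor
        · rw [selAlt_append _ _ true, selAlt_append _ _ false, c0, c1, hlen i (by omega),
            if_pos hpar, if_neg (by omega)]
          have hdec2 : decide ((i + 1) % 2 = 0) = false := by
            simp only [decide_eq_false_iff_not]; omega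
          rw [hdec2, hpi]
          exact hstr.2
        · intro j hj
          rw [selAlt_append _ _ true, c0, hlen i (by omega), if_pos hpar]
          by_cases hji : (j : ℕ) < i
          · rw [Finset.mem_insert]
            constructor
            · rintro (he | hm)
              · exfalso
                have := hinj he
                have : (j : ℕ) = i := by simpa using congrArg Fin.val this
                omega
              · exact (ihMem j hji).1 hm
            · intro hpj
              exact Or.inr ((ihMem j hji).2 hpj)
          · have hji2 : (j : ℕ) = i := by omega
            constructor
            · intro _; omega
            · intro _
              rw [Finset.mem_insert]
              left
              congr 1
              exact Fin.ext hji2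
      · -- Blue's move
        have hdec : decide (i % 2 = 0) = false := by simp [hpar]
        rw [hdec, RedCanWin_blue hnu] at ihR
        have hstep := ihR (p ⟨i, hi⟩) hpm
        rw [hnext i hi]
        constructor
        · rw [selAlt_append _ _ true, selAlt_append _ _ false, c0, c1, hlen i (by omega),
            if_neg (by omega), if_pos (by omega)]
          have hdec2 : decide ((i + 1) % 2 = 0) = true := by
            simp only [decide_eq_true_eq]; omega
          rw [hdec2]
          exact hstep
        · intro j hj
          rw [selAlt_append _ _ true, c0, hlen i (by omega), if_neg (by omega)]
          by_cases hji : (j : ℕ) < i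
          · exact ihMem j hji
          · have hji2 : (j : ℕ) = i := by omega
            constructor
            · intro hm
              exfalso
              have hmem : p j ∈ (List.ofFn p).take i := selAlt_subset hm
              have hjeq : j = ⟨i, hi⟩ := Fin.ext hji2
              rw [hjeq] at hmem
              exact hfresh i hi hmem
            · intro hp0; omega
  obtain ⟨hR, hMem⟩ := key (n * n) le_rfl
  have htake : (List.ofFn p).take (n * n) = (List.ofFn p) := by
    have h0 := List.take_length (l := List.ofFn p)
    rwa [hLlen] at h0
  rw [htake] at hR hMem
  have huniv : selAlt true (List.ofFn p) ∪ selAlt false (List.ofFn p) = Finset.univ := by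
    rw [selAlt_union]
    apply Finset.eq_univ_of_card
    rw [List.toFinset_card_of_nodup hLnodup, hLlen, Fintype.card_prod, Fintype.card_fin]
  rw [RedCanWin_leaf huniv] at hR
  have hbij : Function.Bijective p := (Fintype.bijective_iff_injective_and_card p).2
    ⟨hinj, by simp [Fintype.card_prod]⟩
  have heq : (fun q => decide (q ∈ selAlt true (List.ofFn p))) = χ := by
    funext q
    obtain ⟨j, rfl⟩ := hbij.2 q
    rw [hχ j]
    have hms := hMem j (j.isLt)
    by_cases hj : (j : ℕ) % 2 = 0
    · simp [hj, hms.2 hj]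
    · have hnm : p j ∉ selAlt true (List.ofFn p) := fun hm => hj (hms.1 hm)
      simp [hj, hnm]
  rw [← heq]
  exact hR

/-- The first player (Red) has a winning strategy in finite Hex on the `n × n` board:
there is a Red strategy `σ` (assigning to each position of even length an unclaimed cell)
such that every complete play of `n²` moves consistent with `σ` results in a total
coloring (Red's cells red, Blue's cells blue) that Red wins. -/
theorem finite_hex_first_player_winning_strategy (n : ℕ) (hn : 1 ≤ n) :
    ∃ σ : List (Fin n × Fin n) → Fin n × Fin n,
      (∀ l : List (Fin n × Fin n),
        l.Nodup → l.length % 2 = 0 → l.length < n * n → σ l ∉ l) ∧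
      ∀ p : Fin (n * n) → Fin n × Fin n, Function.Injective p →
        (∀ i : Fin (n * n), (i : ℕ) % 2 = 0 → p i = σ ((List.ofFn p).take i)) →
        ∀ χ : Fin n × Fin n → Bool,
          (∀ i : Fin (n * n), χ (p i) = decide ((i : ℕ) % 2 = 0)) →
          RedWinsTotal χ := by
  refine ⟨hexStrat n hn, ?_, ?_⟩
  · intro l _ _ hlen
    exact hexStrat_not_mem hn l hlen
  · intro p hinj hcons χ hχ
    exact hexStrat_wins hn p hinj hcons χ hχ
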